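/- An upper semicontinuous f : E → [0,∞] is upper radial if and only if every (x,u) ∈ hypo f and every (ζ,δ) ∈ N^P_{hypo f}((x,u)) satisfy ⟨ζ,x⟩ + δu ≥ 0. Likewise, a lower semicontinuous f is lower radial if and only if every (x,u) ∈ epi f and every (ζ,δ) ∈ N^P_{epi f}((x,u)) satisfy ⟨ζ,x⟩ + δu ≤ 0. -/

import Mathlib

open Set
open scoped ENNReal RealInnerProductSpace

noncomputable section

variable {E : Type*} [NormedAddCommGroup E] [InnerProductSpace ℝ E] [FiniteDimensional ℝ E]

/-- The perspective function `f^p(y,v) = v·f(y/v)` (for `v > 0`). -/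
def persp (f : E → ℝ≥0∞) (y : E) (v : ℝ) : ℝ≥0∞ := ENNReal.ofReal v * f (v⁻¹ • y)

/-- The epigraph `epi f = {(x,u) ∈ E × ℝ₊₊ : f(x) ≤ u}`. -/
def epiSet (f : E → ℝ≥0∞) : Set (E × ℝ) :=
  {p : E × ℝ | 0 < p.2 ∧ f p.1 ≤ ENNReal.ofReal p.2}

/-- The hypograph `hypo f = {(x,u) ∈ E × ℝ₊₊ : f(x) ≥ u}`. -/
def hypoSet (f : E → ℝ≥0∞) : Set (E × ℝ) :=
  {p : E × ℝ | 0 < p.2 ∧ ENNReal.ofReal p.2 ≤ f p.1}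

/-- `f` is upper radial: every `f^p(y,·)` is nondecreasing and upper semicontinuous on `ℝ₊₊`. -/
def UpperRadial (f : E → ℝ≥0∞) : Prop :=
  ∀ y : E, MonotoneOn (persp f y) (Ioi (0 : ℝ)) ∧
    UpperSemicontinuousOn (persp f y) (Ioi (0 : ℝ))

/-- `f` is lower radial: every `f^p(y,·)` is nondecreasing and lower semicontinuous on `ℝ₊₊`. -/
def LowerRadial (f : E → ℝ≥0∞) : Prop :=
  ∀ y : E, MonotoneOn (persp f y) (Ioi (0 : ℝ)) ∧
    LowerSemicontinuousOn (persp f y) (Ioi (0 : ℝ))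

/-- The Euclidean inner product on `E × ℝ`. -/
def iprod (p q : E × ℝ) : ℝ := ⟪p.1, q.1⟫ + p.2 * q.2

/-- Squared Euclidean distance on `E × ℝ`. -/
def sqDist (p q : E × ℝ) : ℝ := ‖p.1 - q.1‖ ^ 2 + (p.2 - q.2) ^ 2

/-- The proximal normal cone of `S` at `p`. -/
def normalConeP (S : Set (E × ℝ)) (p : E × ℝ) : Set (E × ℝ) :=
  {w : E × ℝ | ∃ ε : ℝ, 0 < ε ∧ ∀ q ∈ S, sqDist (p + ε • w) p ≤ sqDist (p + ε • w) q}

set_option linter.unusedSectionVars false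

lemma iprod_comm (p q : E × ℝ) : iprod p q = iprod q p := by
  simp [iprod, real_inner_comm, mul_comm]

lemma sqDist_comm (p q : E × ℝ) : sqDist p q = sqDist q p := by
  simp [sqDist, norm_sub_rev]
  ring

lemma sqDist_nonneg (p q : E × ℝ) : 0 ≤ sqDist p q := by
  have := sq_nonneg ‖p.1 - q.1‖
  have := sq_nonneg (p.2 - q.2)
  unfold sqDist; linarith

lemma iprod_self (p : E × ℝ) : iprod p p = ‖p.1‖ ^ 2 + p.2 ^ 2 := by
  simp [iprod, real_inner_self_eq_norm_sq]; ring
set_option linter.unusedSectionVars false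

lemma sqDist_expand (q z w : E × ℝ) (c : ℝ) :
    sqDist (q + c • w) z = sqDist q z + 2 * c * iprod w (q - z) + c ^ 2 * iprod w w := by
  have h1 : (q + c • w).1 - z.1 = (q.1 - z.1) + c • w.1 := by
    simp [Prod.add_def]; abel
  have h2 : (q + c • w).2 - z.2 = (q.2 - z.2) + c * w.2 := by
    simp [Prod.add_def]; ring
  have hn : ‖(q.1 - z.1) + c • w.1‖ ^ 2
      = ‖q.1 - z.1‖ ^ 2 + 2 * (c * ⟪q.1 - z.1, w.1⟫) + c ^ 2 * ‖w.1‖ ^ 2 := by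
    rw [norm_add_sq_real, real_inner_smul_right, norm_smul, Real.norm_eq_abs, mul_pow, sq_abs]
  have hsym : ⟪q.1 - z.1, w.1⟫ = ⟪w.1, q.1 - z.1⟫ := real_inner_comm _ _
  unfold sqDist iprod
  rw [h1, h2, hn, hsym]
  simp only [Prod.fst_sub, Prod.snd_sub, real_inner_self_eq_norm_sq]
  ring
def DDist (S : Set (E × ℝ)) (q : E × ℝ) : ℝ := sInf ((sqDist q) '' S)

lemma bddBelow_sqDist_image (S : Set (E × ℝ)) (q : E × ℝ) : BddBelow ((sqDist q) '' S) := by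
  refine ⟨0, ?_⟩
  rintro _ ⟨z, _, rfl⟩
  exact sqDist_nonneg _ _

lemma DDist_nonneg {S : Set (E × ℝ)} (hS : S.Nonempty) (q : E × ℝ) : 0 ≤ DDist S q :=
  le_csInf (hS.image _) (by rintro _ ⟨z, _, rfl⟩; exact sqDist_nonneg _ _)

lemma DDist_le {S : Set (E × ℝ)} {z : E × ℝ} (hz : z ∈ S) (q : E × ℝ) :
    DDist S q ≤ sqDist q z :=
  csInf_le (bddBelow_sqDist_image S q) (mem_image_of_mem _ hz)

lemma exists_sqDist_lt {S : Set (E × ℝ)} (hS : S.Nonempty) {q : E × ℝ} {r : ℝ}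
    (h : DDist S q < r) : ∃ z ∈ S, sqDist q z < r := by
  obtain ⟨_, ⟨z, hz, rfl⟩, hlt⟩ := exists_lt_of_csInf_lt (hS.image _) h
  exact ⟨z, hz, hlt⟩

lemma continuous_sqDist (q : E × ℝ) : Continuous fun z : E × ℝ => sqDist q z := by
  unfold sqDist
  fun_prop

lemma mem_closure_of_DDist_eq_zero {S : Set (E × ℝ)} (hS : S.Nonempty) {q : E × ℝ}
    (h : DDist S q ≤ 0) : q ∈ closure S := by
  rw [Metric.mem_closure_iff]
  intro ε hε
  obtain ⟨z, hz, hlt⟩ := exists_sqDist_lt hS (lt_of_le_of_lt h (by positivity : (0:ℝ) < ε ^ 2))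
  refine ⟨z, hz, ?_⟩
  have h1 : ‖q.1 - z.1‖ ^ 2 < ε ^ 2 := by
    have := sq_nonneg (q.2 - z.2); unfold sqDist at hlt; linarith
  have h2 : (q.2 - z.2) ^ 2 < ε ^ 2 := by
    have := sq_nonneg ‖q.1 - z.1‖; unfold sqDist at hlt; linarith
  have h1' : ‖q.1 - z.1‖ < ε := lt_of_pow_lt_pow_left₀ 2 hε.le h1
  have h2' : |q.2 - z.2| < ε := by
    have : |q.2 - z.2| ^ 2 < ε ^ 2 := by rwa [sq_abs]
    exact lt_of_pow_lt_pow_left₀ 2 hε.le this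
  rw [Prod.dist_eq, dist_eq_norm, Real.dist_eq]
  exact max_lt h1' h2'

lemma exists_nearest {S : Set (E × ℝ)} (hcl : ∀ z ∈ closure S, 0 < z.2 → z ∈ S)
    (hS : S.Nonempty) {q : E × ℝ} (hq : 0 < q.2) (hlt : DDist S q < q.2 ^ 2) :
    ∃ z ∈ S, (∀ z' ∈ S, sqDist q z ≤ sqDist q z') ∧ sqDist q z = DDist S q := by
  set r : ℝ := (DDist S q + q.2 ^ 2) / 2 with hr
  have hDr : DDist S q < r := by rw [hr]; linarith
  have hrq : r < q.2 ^ 2 := by rw [hr]; linarith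
  have hr0 : 0 ≤ r := by
    have := DDist_nonneg hS q; rw [hr]; nlinarith
  obtain ⟨z₀, hz₀S, hz₀⟩ := exists_sqDist_lt hS hDr
  have hsq : Real.sqrt r < q.2 := by
    have : Real.sqrt r < Real.sqrt (q.2 ^ 2) := Real.sqrt_lt_sqrt hr0 hrq
    rwa [Real.sqrt_sq hq.le] at this
  set c : ℝ := q.2 - Real.sqrt r with hc
  have hc0 : 0 < c := by rw [hc]; linarith
  set K : Set (E × ℝ) := {z ∈ S | sqDist q z ≤ r} with hK
  have hKsub : K ⊆ (S ∩ {z : E × ℝ | c ≤ z.2}) ∩ {z : E × ℝ | sqDist q z ≤ r} := by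
    rintro z ⟨hzS, hzr⟩
    have hz2 : (q.2 - z.2) ^ 2 ≤ r := by
      have := sq_nonneg ‖q.1 - z.1‖; unfold sqDist at hzr; linarith
    have : |q.2 - z.2| ≤ Real.sqrt r := Real.abs_le_sqrt hz2
    have : q.2 - z.2 ≤ Real.sqrt r := le_trans (le_abs_self _) this
    exact ⟨⟨hzS, by simp only [mem_setOf_eq]; rw [hc]; linarith⟩, hzr⟩
  have hKeq : K = (S ∩ {z : E × ℝ | c ≤ z.2}) ∩ {z : E × ℝ | sqDist q z ≤ r} := by
    apply Subset.antisymm hKsub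
    rintro z ⟨⟨hzS, _⟩, hzr⟩
    exact ⟨hzS, hzr⟩
  have hA : IsClosed {z : E × ℝ | c ≤ z.2} := isClosed_le continuous_const continuous_snd
  have hclosed1 : IsClosed (S ∩ {z : E × ℝ | c ≤ z.2}) := by
    apply isClosed_of_closure_subset
    intro z hz
    have hz1 : z ∈ closure S := closure_mono inter_subset_left hz
    have hz2 : z ∈ {z : E × ℝ | c ≤ z.2} := by
      have := closure_mono (inter_subset_right (s := S)) hz
      rwa [hA.closure_eq] at this
    exact ⟨hcl z hz1 (lt_of_lt_of_le hc0 hz2), hz2⟩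
  have hclosedK : IsClosed K := by
    rw [hKeq]
    exact hclosed1.inter (isClosed_le (continuous_sqDist q) continuous_const)
  have hKball : K ⊆ Metric.closedBall q (Real.sqrt r) := by
    rintro z ⟨hzS, hzr⟩
    have h1 : ‖q.1 - z.1‖ ^ 2 ≤ r := by
      have := sq_nonneg (q.2 - z.2); unfold sqDist at hzr; linarith
    have h2 : (q.2 - z.2) ^ 2 ≤ r := by
      have := sq_nonneg ‖q.1 - z.1‖; unfold sqDist at hzr; linarith
    have h1' : ‖z.1 - q.1‖ ≤ Real.sqrt r := by
      rw [norm_sub_rev, ← abs_norm]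
      exact Real.abs_le_sqrt h1
    have h2' : |z.2 - q.2| ≤ Real.sqrt r := by
      rw [abs_sub_comm]
      exact Real.abs_le_sqrt h2
    rw [Metric.mem_closedBall, Prod.dist_eq, dist_eq_norm, Real.dist_eq]
    exact max_le h1' h2'
  have hKcompact : IsCompact K :=
    (isCompact_closedBall q (Real.sqrt r)).of_isClosed_subset hclosedK hKball
  have hKne : K.Nonempty := ⟨z₀, hz₀S, hz₀.le⟩
  obtain ⟨z, hzK, hzmin⟩ := hKcompact.exists_isMinOn hKne ((continuous_sqDist q).continuousOn)
  have hmin : ∀ z' ∈ S, sqDist q z ≤ sqDist q z' := by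
    intro z' hz'
    by_cases h : sqDist q z' ≤ r
    · exact hzmin ⟨hz', h⟩
    · have : sqDist q z ≤ sqDist q z₀ := hzmin (⟨hz₀S, hz₀.le⟩ : z₀ ∈ K)
      linarith [not_le.mp h]
  refine ⟨z, hzK.1, hmin, le_antisymm ?_ (DDist_le hzK.1 q)⟩
  exact le_csInf (hS.image _) (by rintro _ ⟨z', hz', rfl⟩; exact hmin z' hz')
lemma iprod_add_left (p q r : E × ℝ) : iprod (p + q) r = iprod p r + iprod q r := by
  simp [iprod, inner_add_left, Prod.add_def]; ring

lemma iprod_smul_left (c : ℝ) (p q : E × ℝ) : iprod (c • p) q = c * iprod p q := by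
  simp [iprod, real_inner_smul_left, Prod.smul_def, smul_eq_mul]; ring

lemma sqDist_eq_iprod (p q : E × ℝ) : sqDist p q = iprod (p - q) (p - q) := by
  simp [sqDist, iprod, real_inner_self_eq_norm_sq]; ring

set_option maxHeartbeats 1000000 in
lemma key_scale {S : Set (E × ℝ)} (hcl : ∀ z ∈ closure S, 0 < z.2 → z ∈ S)
    {p : E × ℝ} (hp : p ∈ S) (hp2 : 0 < p.2) {t : ℝ} (ht : 0 < t)
    (hdir : ∀ z ∈ S, ∀ q : E × ℝ, (∀ z' ∈ S, sqDist q z ≤ sqDist q z') →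
      (t - 1) * iprod (q - z) z ≤ 0) :
    t • p ∈ S := by
  have hS : S.Nonempty := ⟨p, hp⟩
  set a : ℝ := min t 1 with ha
  have ha0 : 0 < a := lt_min ht one_pos
  set L : ℝ := |t - 1| with hL
  have hL0 : 0 ≤ L := abs_nonneg _
  set N : ℝ := iprod p p with hN
  have hN0 : 0 ≤ N := by rw [hN, iprod_self]; positivity
  set M : ℝ := Real.exp (2 * L / a) with hM
  have hM1 : 1 ≤ M := Real.one_le_exp (by positivity)
  -- the main estimate
  have main : ∀ ε > 0, DDist S (t • p) ≤ ε := by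
    intro ε hε
    obtain ⟨n, hn⟩ := exists_nat_gt (max 1 (M * L ^ 2 * N / min ε ((a * p.2) ^ 2)))
    have hn1 : (1 : ℝ) ≤ n := le_of_lt (lt_of_le_of_lt (le_max_left _ _) hn)
    have hn0 : (0 : ℝ) < n := lt_of_lt_of_le one_pos hn1
    have hmin0 : 0 < min ε ((a * p.2) ^ 2) := lt_min hε (by positivity)
    have hkey : M * L ^ 2 * N / n < min ε ((a * p.2) ^ 2) := by
      rw [div_lt_iff₀ hn0]
      have h2 : M * L ^ 2 * N / min ε ((a * p.2) ^ 2) < n :=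
        lt_of_le_of_lt (le_max_right _ _) hn
      rw [div_lt_iff₀ hmin0] at h2
      linarith [mul_lt_mul_of_pos_left h2 hmin0]
    have hne : (n:ℝ) ≠ 0 := hn0.ne'
    set δ : ℝ := (t - 1) / n with hδdef
    set Δ : ℝ := L / n with hΔdef
    have hΔ0 : 0 ≤ Δ := by positivity
    have habsδ : |δ| = Δ := by rw [hδdef, hΔdef, hL, abs_div, abs_of_pos hn0]
    have hδ2 : δ ^ 2 = Δ ^ 2 := by
      rw [hδdef, hΔdef, hL, div_pow, div_pow, sq_abs]
    set C : ℝ := 1 + 2 * Δ / a with hCdef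
    have hC1 : 1 ≤ C := by rw [hCdef]; have : 0 ≤ 2 * Δ / a := by positivity
                           linarith
    have hC0 : 0 ≤ C := le_trans zero_le_one hC1
    have hM0 : 0 < M := Real.exp_pos _
    -- uniform bound on the invariant
    have hbound : ∀ k : ℕ, k ≤ n → C ^ k * (k * Δ ^ 2 * N) ≤ M * L ^ 2 * N / n := by
      intro k hkn
      have hk' : (k : ℝ) ≤ n := by exact_mod_cast hkn
      have hCexp : C ≤ Real.exp (2 * Δ / a) := by
        have := Real.add_one_le_exp (2 * Δ / a); rw [hCdef]; linarith
      have hCk : C ^ k ≤ M := by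
        calc C ^ k ≤ Real.exp (2 * Δ / a) ^ k := pow_le_pow_left₀ hC0 hCexp k
          _ = Real.exp (k * (2 * Δ / a)) := by rw [← Real.exp_nat_mul]
          _ ≤ M := by
              rw [hM]
              apply Real.exp_le_exp.mpr
              have he : (k : ℝ) * (2 * Δ / a) = (k / n) * (2 * L / a) := by
                rw [hΔdef]; field_simp
              have hk1 : (k : ℝ) / n ≤ 1 := (div_le_one hn0).mpr hk'
              rw [he]
              exact mul_le_of_le_one_left (by positivity) hk1
      have h5 : (k : ℝ) * Δ ^ 2 * N ≤ L ^ 2 * N / n := by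
        have e1 : (k : ℝ) * Δ ^ 2 * N = (k * L ^ 2 * N) / n ^ 2 := by
          rw [hΔdef]; ring
        have e2 : L ^ 2 * N / n = (n * (L ^ 2 * N)) / n ^ 2 := by
          field_simp
        rw [e1, e2, div_le_div_iff₀ (by positivity) (by positivity)]
        nlinarith [mul_le_mul_of_nonneg_right hk' (mul_nonneg (sq_nonneg L) hN0),
          sq_nonneg (n : ℝ), hn0]
      calc C ^ k * (k * Δ ^ 2 * N) ≤ M * (k * Δ ^ 2 * N) :=
            mul_le_mul_of_nonneg_right hCk (by positivity)
        _ ≤ M * (L ^ 2 * N / n) := mul_le_mul_of_nonneg_left h5 hM0.le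
        _ = M * L ^ 2 * N / n := by ring
    -- the inductive claim
    have claim : ∀ k : ℕ, k ≤ n → DDist S ((1 + k * δ) • p) ≤ C ^ k * (k * Δ ^ 2 * N) := by
      intro k
      induction k with
      | zero =>
        intro _
        simp only [Nat.cast_zero, zero_mul, add_zero, one_smul, pow_zero, one_mul, mul_zero,
          zero_mul]
        have h := DDist_le hp p
        simp only [sqDist, sub_self, norm_zero] at h
        simpa using h
      | succ k IH =>
        intro hk1n
        have hkn : k ≤ n := Nat.le_of_succ_le hk1n
        have hk := IH hkn
        have hk' : (k : ℝ) ≤ n := by exact_mod_cast hkn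
        set q : E × ℝ := (1 + k * δ) • p with hqdef
        have hnδ : (n : ℝ) * δ = t - 1 := by rw [hδdef]; field_simp
        have hskA : a ≤ 1 + k * δ := by
          rcases le_total t 1 with h | h
          · have hδ0 : δ ≤ 0 := by
              rw [hδdef]; apply div_nonpos_of_nonpos_of_nonneg <;> linarith
            have h1 : (n : ℝ) * δ ≤ (k : ℝ) * δ :=
              mul_le_mul_of_nonpos_right hk' hδ0
            have h2 : a ≤ t := min_le_left _ _
            linarith
          · have hδ0 : 0 ≤ δ := by
              rw [hδdef]; apply div_nonneg <;> linarith
            have h2 : a ≤ 1 := min_le_right _ _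
            have h3 : 0 ≤ (k : ℝ) * δ := mul_nonneg (Nat.cast_nonneg k) hδ0
            linarith
        have hsk0 : 0 < 1 + k * δ := lt_of_lt_of_le ha0 hskA
        have hq2 : q.2 = (1 + k * δ) * p.2 := by
          rw [hqdef]; simp [Prod.smul_def, smul_eq_mul]
        have hq2pos : 0 < q.2 := by rw [hq2]; positivity
        have hDlt : DDist S q < q.2 ^ 2 := by
          have h1 := hbound k hkn
          have h2 : M * L ^ 2 * N / n < (a * p.2) ^ 2 :=
            lt_of_lt_of_le hkey (min_le_right _ _)
          have h3 : (a * p.2) ^ 2 ≤ q.2 ^ 2 := by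
            rw [hq2]
            apply pow_le_pow_left₀ (by positivity)
            exact mul_le_mul_of_nonneg_right hskA hp2.le
          linarith
        obtain ⟨z, hzS, hzmin, hzeq⟩ := exists_nearest hcl hS hq2pos hDlt
        have hdz := hdir z hzS q hzmin
        set D : ℝ := sqDist q z with hDdef
        set I : ℝ := iprod z (q - z) with hIdef
        have hD0 : 0 ≤ D := sqDist_nonneg _ _
        have hinv0 : 0 < (1 + k * δ)⁻¹ := inv_pos.mpr hsk0
        have hinva : (1 + k * δ)⁻¹ ≤ a⁻¹ := inv_anti₀ ha0 hskA
        -- the expansion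
        have hq' : (1 + (↑(k + 1) : ℝ) * δ) • p = q + δ • p := by
          have hcast : (1 + (↑(k + 1) : ℝ) * δ) = (1 + k * δ) + δ := by push_cast; ring
          rw [hcast, add_smul, hqdef]
        have hexp : sqDist (q + δ • p) z = D + 2 * δ * iprod p (q - z) + δ ^ 2 * N :=
          sqDist_expand q z p δ
        have hpq : iprod p (q - z) = (1 + k * δ)⁻¹ * (D + I) := by
          have h1 : p = (1 + k * δ)⁻¹ • q := by
            rw [hqdef, inv_smul_smul₀ hsk0.ne']
          rw [h1, iprod_smul_left]
          congr 1
          calc iprod q (q - z) = iprod ((q - z) + z) (q - z) := by rw [sub_add_cancel]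
            _ = iprod (q - z) (q - z) + iprod z (q - z) := iprod_add_left _ _ _
            _ = D + I := by rw [← sqDist_eq_iprod, ← hDdef, ← hIdef]
        have hterm2 : δ * I ≤ 0 := by
          rw [hIdef, iprod_comm]
          have hδe : δ = (1 / n) * (t - 1) := by rw [hδdef]; ring
          rw [hδe, mul_assoc]
          exact mul_nonpos_of_nonneg_of_nonpos (by positivity) hdz
        have hterm1 : δ * ((1 + k * δ)⁻¹ * D) ≤ Δ / a * D := by
          have hb : δ * (1 + k * δ)⁻¹ ≤ Δ / a := by
            have h1 : δ * (1 + k * δ)⁻¹ ≤ |δ * (1 + k * δ)⁻¹| := le_abs_self _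
            have h2 : |δ * (1 + k * δ)⁻¹| = Δ * (1 + k * δ)⁻¹ := by
              rw [abs_mul, habsδ, abs_of_pos hinv0]
            have h3 : Δ * (1 + k * δ)⁻¹ ≤ Δ * a⁻¹ :=
              mul_le_mul_of_nonneg_left hinva hΔ0
            rw [div_eq_mul_inv]
            linarith
          calc δ * ((1 + k * δ)⁻¹ * D) = (δ * (1 + k * δ)⁻¹) * D := by ring
            _ ≤ Δ / a * D := mul_le_mul_of_nonneg_right hb hD0
        have hstep : sqDist (q + δ • p) z ≤ C * D + Δ ^ 2 * N := by
          rw [hexp, hpq, hδ2, hCdef]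
          have e2 : (1 + k * δ)⁻¹ * (δ * I) ≤ 0 :=
            mul_nonpos_of_nonneg_of_nonpos hinv0.le hterm2
          have h6 : δ * ((1 + k * δ)⁻¹ * (D + I)) ≤ Δ / a * D := by
            have e1 : δ * ((1 + k * δ)⁻¹ * (D + I))
                = δ * ((1 + k * δ)⁻¹ * D) + (1 + k * δ)⁻¹ * (δ * I) := by ring
            rw [e1]
            have := add_le_add hterm1 e2
            simpa using this
          have h7 : 2 * (δ * ((1 + k * δ)⁻¹ * (D + I))) ≤ 2 * (Δ / a * D) :=
            mul_le_mul_of_nonneg_left h6 (by norm_num)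
          calc D + 2 * δ * ((1 + k * δ)⁻¹ * (D + I)) + Δ ^ 2 * N
              = D + 2 * (δ * ((1 + k * δ)⁻¹ * (D + I))) + Δ ^ 2 * N := by ring
            _ ≤ D + 2 * (Δ / a * D) + Δ ^ 2 * N := add_le_add (add_le_add le_rfl h7) le_rfl
            _ = (1 + 2 * Δ / a) * D + Δ ^ 2 * N := by ring
        have hfin : DDist S ((1 + (↑(k + 1) : ℝ) * δ) • p) ≤ C * D + Δ ^ 2 * N := by
          rw [hq']
          exact le_trans (DDist_le hzS _) hstep
        have hD : D ≤ C ^ k * (k * Δ ^ 2 * N) := by rw [hzeq]; exact hk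
        have hCk1 : 1 ≤ C ^ (k + 1) := one_le_pow₀ hC1
        calc DDist S ((1 + (↑(k + 1) : ℝ) * δ) • p) ≤ C * D + Δ ^ 2 * N := hfin
          _ ≤ C ^ (k + 1) * ((↑(k + 1) : ℝ) * Δ ^ 2 * N) := by
              have h1 : C * D ≤ C * (C ^ k * (k * Δ ^ 2 * N)) :=
                mul_le_mul_of_nonneg_left hD hC0
              have h2 : Δ ^ 2 * N ≤ C ^ (k + 1) * (Δ ^ 2 * N) :=
                le_mul_of_one_le_left (by positivity) hCk1
              have e : C * (C ^ k * (k * Δ ^ 2 * N)) + C ^ (k + 1) * (Δ ^ 2 * N)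
                  = C ^ (k + 1) * (((k : ℝ) + 1) * Δ ^ 2 * N) := by rw [pow_succ]; ring
              push_cast
              exact le_of_le_of_eq (add_le_add h1 h2) e
    -- conclude
    have hfinal := claim n le_rfl
    have hsn : (1 + (n : ℝ) * δ) = t := by
      rw [hδdef]; field_simp; ring
    rw [hsn] at hfinal
    have := hbound n le_rfl
    have h2 : M * L ^ 2 * N / n < ε := lt_of_lt_of_le hkey (min_le_left _ _)
    linarith
  -- conclude
  have hD0 : DDist S (t • p) ≤ 0 := by
    by_contra h
    push_neg at h
    have := main (DDist S (t • p) / 2) (by linarith)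
    linarith
  have hmem : t • p ∈ closure S := mem_closure_of_DDist_eq_zero hS hD0
  exact hcl _ hmem (by simp [Prod.smul_def, smul_eq_mul]; positivity)
lemma normal_of_nearest {S : Set (E × ℝ)} {z q : E × ℝ}
    (hmin : ∀ z' ∈ S, sqDist q z ≤ sqDist q z') : q - z ∈ normalConeP S z := by
  refine ⟨1, one_pos, ?_⟩
  intro q' hq'
  have he : z + (1 : ℝ) • (q - z) = q := by rw [one_smul]; abel
  rw [he]
  exact hmin q' hq'

lemma star_hypo {f : E → ℝ≥0∞} (hcl : ∀ p ∈ closure (hypoSet f), 0 < p.2 → p ∈ hypoSet f)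
    (hN : ∀ p ∈ hypoSet f, ∀ w ∈ normalConeP (hypoSet f) p, 0 ≤ iprod w p)
    {p : E × ℝ} (hp : p ∈ hypoSet f) {t : ℝ} (ht : 0 < t) (ht1 : t ≤ 1) :
    t • p ∈ hypoSet f := by
  apply key_scale hcl hp hp.1 ht
  intro z hz q hq
  have := hN z hz _ (normal_of_nearest hq)
  exact mul_nonpos_iff.mpr (Or.inr ⟨by linarith, this⟩)

lemma star_epi {f : E → ℝ≥0∞} (hcl : ∀ p ∈ closure (epiSet f), 0 < p.2 → p ∈ epiSet f)
    (hN : ∀ p ∈ epiSet f, ∀ w ∈ normalConeP (epiSet f) p, iprod w p ≤ 0)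
    {p : E × ℝ} (hp : p ∈ epiSet f) {t : ℝ} (ht1 : 1 ≤ t) :
    t • p ∈ epiSet f := by
  apply key_scale hcl hp hp.1 (lt_of_lt_of_le one_pos ht1)
  intro z hz q hq
  have := hN z hz _ (normal_of_nearest hq)
  exact mul_nonpos_iff.mpr (Or.inl ⟨by linarith, this⟩)
lemma persp_div_mem {f : E → ℝ≥0∞} {c v : ℝ} (hc : 0 < c) (hv : 0 < v) :
    ENNReal.ofReal c ≤ persp f y v ↔ (v⁻¹ • y, c / v) ∈ hypoSet f := by
  have hv0 : ENNReal.ofReal v ≠ 0 := by simp [hv]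
  have hvt : ENNReal.ofReal v ≠ ⊤ := ENNReal.ofReal_ne_top
  constructor
  · intro h
    refine ⟨by positivity, ?_⟩
    simp only
    rw [ENNReal.ofReal_div_of_pos hv, ENNReal.div_le_iff_le_mul (Or.inl hv0) (Or.inl hvt),
      mul_comm]
    exact h
  · rintro ⟨-, h⟩
    simp only at h
    rw [ENNReal.ofReal_div_of_pos hv, ENNReal.div_le_iff_le_mul (Or.inl hv0) (Or.inl hvt),
      mul_comm] at h
    exact h
lemma persp_div_mem_epi {f : E → ℝ≥0∞} {y : E} {c v : ℝ} (hc : 0 < c) (hv : 0 < v) :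
    persp f y v ≤ ENNReal.ofReal c ↔ (v⁻¹ • y, c / v) ∈ epiSet f := by
  have hv0 : ENNReal.ofReal v ≠ 0 := by simp [hv]
  have hvt : ENNReal.ofReal v ≠ ⊤ := ENNReal.ofReal_ne_top
  have key : persp f y v ≤ ENNReal.ofReal c ↔ f (v⁻¹ • y) ≤ ENNReal.ofReal (c / v) := by
    rw [ENNReal.ofReal_div_of_pos hv,
      ENNReal.le_div_iff_mul_le (Or.inl hv0) (Or.inl hvt), mul_comm]
    rfl
  constructor
  · intro h
    exact ⟨by positivity, key.mp h⟩
  · rintro ⟨-, h⟩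
    exact key.mpr h

lemma tendsto_phi {y : E} {c v : ℝ} (hv : 0 < v) :
    Filter.Tendsto (fun w : ℝ => ((w⁻¹ • y, c / w) : E × ℝ)) (nhdsWithin v (Ioi 0))
      (nhds (v⁻¹ • y, c / v)) := by
  apply Filter.Tendsto.mono_left _ nhdsWithin_le_nhds
  apply ContinuousAt.tendsto
  exact ((continuousAt_inv₀ hv.ne').smul continuousAt_const).prodMk
    (continuousAt_const.div continuousAt_id hv.ne')

lemma usc_persp {f : E → ℝ≥0∞} (hcl : ∀ p ∈ closure (hypoSet f), 0 < p.2 → p ∈ hypoSet f)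
    (y : E) : UpperSemicontinuousOn (persp f y) (Ioi (0 : ℝ)) := by
  intro v hv u hu
  rw [mem_Ioi] at hv
  obtain ⟨c, -, h1, h2⟩ := ENNReal.lt_iff_exists_real_btwn.mp hu
  have hc0 : 0 < c := by
    by_contra h
    push_neg at h
    rw [ENNReal.ofReal_eq_zero.mpr h] at h1
    simp at h1
  by_contra hcon
  have hfreq : ∃ᶠ v' in nhdsWithin v (Ioi 0), ¬ persp f y v' < u := Filter.not_eventually.mp hcon
  have hfreq2 : ∃ᶠ v' in nhdsWithin v (Ioi 0),
      ((v'⁻¹ • y, c / v') : E × ℝ) ∈ hypoSet f := by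
    refine (hfreq.and_eventually (eventually_mem_nhdsWithin)).mono ?_
    rintro v' ⟨h', hmem⟩
    rw [mem_Ioi] at hmem
    exact (persp_div_mem hc0 hmem).mp (le_trans h2.le (not_lt.mp h'))
  have hclosure : ((v⁻¹ • y, c / v) : E × ℝ) ∈ closure (hypoSet f) :=
    mem_closure_of_frequently_of_tendsto hfreq2 (tendsto_phi hv)
  have hin := hcl _ hclosure (by positivity)
  exact absurd h1 (not_lt.mpr ((persp_div_mem hc0 hv).mpr hin))

lemma lsc_persp {f : E → ℝ≥0∞} (hcl : ∀ p ∈ closure (epiSet f), 0 < p.2 → p ∈ epiSet f)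
    (y : E) : LowerSemicontinuousOn (persp f y) (Ioi (0 : ℝ)) := by
  intro v hv u hu
  rw [mem_Ioi] at hv
  obtain ⟨c, -, h1, h2⟩ := ENNReal.lt_iff_exists_real_btwn.mp hu
  have hc0 : 0 < c := by
    by_contra h
    push_neg at h
    rw [ENNReal.ofReal_eq_zero.mpr h] at h1
    simp at h1
  by_contra hcon
  have hfreq : ∃ᶠ v' in nhdsWithin v (Ioi 0), ¬ u < persp f y v' := Filter.not_eventually.mp hcon
  have hfreq2 : ∃ᶠ v' in nhdsWithin v (Ioi 0),
      ((v'⁻¹ • y, c / v') : E × ℝ) ∈ epiSet f := by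
    refine (hfreq.and_eventually (eventually_mem_nhdsWithin)).mono ?_
    rintro v' ⟨h', hmem⟩
    rw [mem_Ioi] at hmem
    exact (persp_div_mem_epi hc0 hmem).mp (le_trans (not_lt.mp h') h1.le)
  have hclosure : ((v⁻¹ • y, c / v) : E × ℝ) ∈ closure (epiSet f) :=
    mem_closure_of_frequently_of_tendsto hfreq2 (tendsto_phi hv)
  have hin := hcl _ hclosure (by positivity)
  exact absurd h2 (not_lt.mpr ((persp_div_mem_epi hc0 hv).mpr hin))
lemma iprod_smul_right (c : ℝ) (p q : E × ℝ) : iprod p (c • q) = c * iprod p q := by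
  rw [iprod_comm, iprod_smul_left, iprod_comm]

lemma star_of_mono_hypo {f : E → ℝ≥0∞} (hmono : ∀ y : E, MonotoneOn (persp f y) (Ioi (0:ℝ)))
    {p : E × ℝ} (hp : p ∈ hypoSet f) {t : ℝ} (ht : 0 < t) (ht1 : t ≤ 1) :
    t • p ∈ hypoSet f := by
  obtain ⟨hp2, hple⟩ := hp
  have h := hmono (t • p.1) (mem_Ioi.mpr ht) (mem_Ioi.mpr one_pos) ht1
  have e1 : persp f (t • p.1) t = ENNReal.ofReal t * f p.1 := by
    rw [persp, smul_smul, inv_mul_cancel₀ ht.ne', one_smul]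
  have e2 : persp f (t • p.1) 1 = f (t • p.1) := by
    rw [persp, inv_one, one_smul, ENNReal.ofReal_one, one_mul]
  rw [e1, e2] at h
  refine ⟨?_, ?_⟩
  · simp only [Prod.smul_snd, smul_eq_mul]
    positivity
  · simp only [Prod.smul_snd, Prod.smul_fst, smul_eq_mul]
    calc ENNReal.ofReal (t * p.2) = ENNReal.ofReal t * ENNReal.ofReal p.2 :=
          ENNReal.ofReal_mul ht.le
      _ ≤ ENNReal.ofReal t * f p.1 := mul_le_mul_right hple _
      _ ≤ f (t • p.1) := h

lemma star_of_mono_epi {f : E → ℝ≥0∞} (hmono : ∀ y : E, MonotoneOn (persp f y) (Ioi (0:ℝ)))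
    {p : E × ℝ} (hp : p ∈ epiSet f) {t : ℝ} (ht1 : 1 ≤ t) :
    t • p ∈ epiSet f := by
  obtain ⟨hp2, hple⟩ := hp
  have ht : 0 < t := lt_of_lt_of_le one_pos ht1
  have h := hmono (t • p.1) (mem_Ioi.mpr one_pos) (mem_Ioi.mpr ht) ht1
  have e1 : persp f (t • p.1) t = ENNReal.ofReal t * f p.1 := by
    rw [persp, smul_smul, inv_mul_cancel₀ ht.ne', one_smul]
  have e2 : persp f (t • p.1) 1 = f (t • p.1) := by
    rw [persp, inv_one, one_smul, ENNReal.ofReal_one, one_mul]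
  rw [e1, e2] at h
  refine ⟨?_, ?_⟩
  · simp only [Prod.smul_snd, smul_eq_mul]
    positivity
  · simp only [Prod.smul_snd, Prod.smul_fst, smul_eq_mul]
    calc f (t • p.1) ≤ ENNReal.ofReal t * f p.1 := h
      _ ≤ ENNReal.ofReal t * ENNReal.ofReal p.2 := mul_le_mul_right hple _
      _ = ENNReal.ofReal (t * p.2) := (ENNReal.ofReal_mul ht.le).symm

lemma scale_of_star_hypo {f : E → ℝ≥0∞}
    (hstar : ∀ p ∈ hypoSet f, ∀ t : ℝ, 0 < t → t ≤ 1 → t • p ∈ hypoSet f)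
    (x : E) {t : ℝ} (ht : 0 < t) (ht1 : t ≤ 1) :
    ENNReal.ofReal t * f x ≤ f (t • x) := by
  apply ENNReal.le_of_forall_nnreal_lt
  intro r hr
  rcases eq_or_ne r 0 with rfl | hr0
  · simp
  have hrt : (r : ℝ≥0∞) / ENNReal.ofReal t < f x := by
    rw [ENNReal.div_lt_iff (Or.inl (by simp [ht])) (Or.inl ENNReal.ofReal_ne_top)]
    rwa [mul_comm] at hr
  set u : ℝ := r.toReal / t with hu
  have hu0 : 0 < u := by positivity
  have hou : ENNReal.ofReal u = (r : ℝ≥0∞) / ENNReal.ofReal t := by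
    rw [hu, ENNReal.ofReal_div_of_pos ht, ENNReal.ofReal_coe_nnreal]
  have hmem : ((x, u) : E × ℝ) ∈ hypoSet f := ⟨hu0, by rw [hou]; exact hrt.le⟩
  have := hstar _ hmem t ht ht1
  obtain ⟨-, h2⟩ := this
  simp only [Prod.smul_snd, Prod.smul_fst, smul_eq_mul] at h2
  have he : ENNReal.ofReal (t * u) = (r : ℝ≥0∞) := by
    rw [hu, mul_div_cancel₀ _ ht.ne', ENNReal.ofReal_coe_nnreal]
  rwa [he] at h2

lemma mono_of_star_hypo {f : E → ℝ≥0∞}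
    (hstar : ∀ p ∈ hypoSet f, ∀ t : ℝ, 0 < t → t ≤ 1 → t • p ∈ hypoSet f)
    (y : E) : MonotoneOn (persp f y) (Ioi (0:ℝ)) := by
  intro v hv v' hv' hvv'
  rw [mem_Ioi] at hv hv'
  set t : ℝ := v / v' with htdef
  have ht : 0 < t := by positivity
  have ht1 : t ≤ 1 := (div_le_one hv').mpr hvv'
  have hsc := scale_of_star_hypo hstar (v⁻¹ • y) ht ht1
  have he : t • v⁻¹ • y = v'⁻¹ • y := by
    rw [smul_smul, htdef]
    congr 1
    field_simp
  rw [he] at hsc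
  calc persp f y v = ENNReal.ofReal v * f (v⁻¹ • y) := rfl
    _ = ENNReal.ofReal v' * (ENNReal.ofReal t * f (v⁻¹ • y)) := by
        rw [← mul_assoc, ← ENNReal.ofReal_mul hv'.le]
        congr 2
        rw [htdef]; field_simp
    _ ≤ ENNReal.ofReal v' * f (v'⁻¹ • y) := mul_le_mul_right hsc _
    _ = persp f y v' := rfl

lemma scale_of_star_epi {f : E → ℝ≥0∞}
    (hstar : ∀ p ∈ epiSet f, ∀ t : ℝ, 1 ≤ t → t • p ∈ epiSet f)
    (x : E) {t : ℝ} (ht1 : 1 ≤ t) :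
    f (t • x) ≤ ENNReal.ofReal t * f x := by
  have ht : 0 < t := lt_of_lt_of_le one_pos ht1
  rcases eq_or_ne (f x) ⊤ with htop | hfin
  · rw [htop, ENNReal.mul_top (by simp [ht])]
    exact le_top
  apply ENNReal.le_of_forall_pos_le_add
  intro ε hε hlt
  set a : ℝ := (f x).toReal with ha
  have ha0 : 0 ≤ a := ENNReal.toReal_nonneg
  have hfa : f x = ENNReal.ofReal a := (ENNReal.ofReal_toReal hfin).symm
  set u : ℝ := a + (ε : ℝ) / t with hu
  have hu0 : 0 < u := by positivity
  have hmem : ((x, u) : E × ℝ) ∈ epiSet f := by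
    refine ⟨hu0, ?_⟩
    rw [hfa]
    apply ENNReal.ofReal_le_ofReal
    rw [hu]
    have : 0 ≤ (ε : ℝ) / t := by positivity
    linarith
  have hst := hstar _ hmem t ht1
  obtain ⟨-, h2⟩ := hst
  simp only [Prod.smul_fst, Prod.smul_snd, smul_eq_mul] at h2
  have he : ENNReal.ofReal (t * u) = ENNReal.ofReal t * f x + ε := by
    rw [hu, mul_add, mul_div_cancel₀ _ ht.ne',
      ENNReal.ofReal_add (by positivity) (by positivity),
      ENNReal.ofReal_mul ht.le, ← hfa, ENNReal.ofReal_coe_nnreal]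
  rwa [he] at h2

lemma mono_of_star_epi {f : E → ℝ≥0∞}
    (hstar : ∀ p ∈ epiSet f, ∀ t : ℝ, 1 ≤ t → t • p ∈ epiSet f)
    (y : E) : MonotoneOn (persp f y) (Ioi (0:ℝ)) := by
  intro v hv v' hv' hvv'
  rw [mem_Ioi] at hv hv'
  set t : ℝ := v' / v with htdef
  have ht1 : 1 ≤ t := (one_le_div hv).mpr hvv'
  have hsc := scale_of_star_epi hstar (v'⁻¹ • y) ht1
  have he : t • v'⁻¹ • y = v⁻¹ • y := by
    rw [smul_smul, htdef]
    congr 1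
    field_simp
  rw [he] at hsc
  calc persp f y v = ENNReal.ofReal v * f (v⁻¹ • y) := rfl
    _ ≤ ENNReal.ofReal v * (ENNReal.ofReal t * f (v'⁻¹ • y)) := mul_le_mul_right hsc _
    _ = ENNReal.ofReal v' * f (v'⁻¹ • y) := by
        rw [← mul_assoc, ← ENNReal.ofReal_mul hv.le]
        congr 2
        rw [htdef]; field_simp
    _ = persp f y v' := rfl
lemma normal_ineq_hypo {f : E → ℝ≥0∞}
    (hstar : ∀ p ∈ hypoSet f, ∀ t : ℝ, 0 < t → t ≤ 1 → t • p ∈ hypoSet f) :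
    ∀ p ∈ hypoSet f, ∀ w ∈ normalConeP (hypoSet f) p, 0 ≤ iprod w p := by
  rintro p hp w ⟨ε, hε, hmin⟩
  set N : ℝ := iprod p p with hN
  rw [iprod_comm]
  have hkey : ∀ s : ℝ, s ∈ Ioo (0:ℝ) 1 → -(s * N) / (2 * ε) ≤ iprod p w := by
    intro s hs
    have ht := hstar p hp (1 - s) (by linarith [hs.2]) (by linarith [hs.1])
    have h := hmin _ ht
    rw [sqDist_comm (p + ε • w) p, sqDist_comm (p + ε • w) ((1 - s) • p)] at h
    have he : (1 - s) • p = p + (-s) • p := by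
      rw [neg_smul, sub_smul, one_smul]
      abel
    rw [he, sqDist_expand] at h
    have he2 : p - (p + ε • w) = (-ε) • w := by
      rw [neg_smul]
      abel
    rw [he2, iprod_smul_right] at h
    have h' : 0 ≤ 2 * s * ε * iprod p w + s ^ 2 * N := by
      rw [← hN] at h
      nlinarith [h]
    rw [div_le_iff₀ (by positivity : (0:ℝ) < 2 * ε)]
    have h2 : s * (-(s * N)) ≤ s * (iprod p w * (2 * ε)) := by nlinarith [h']
    exact (mul_le_mul_iff_right₀ hs.1).mp h2
  have hten : Filter.Tendsto (fun s : ℝ => -(s * N) / (2 * ε)) (nhdsWithin 0 (Ioi 0))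
      (nhds 0) := by
    have hc : Continuous (fun s : ℝ => -(s * N) / (2 * ε)) := by fun_prop
    have h0 : -((0:ℝ) * N) / (2 * ε) = 0 := by norm_num
    exact (hc.tendsto' 0 0 h0).mono_left nhdsWithin_le_nhds
  have hev : ∀ᶠ s in nhdsWithin 0 (Ioi 0), -(s * N) / (2 * ε) ≤ iprod p w :=
    Filter.eventually_of_mem (Ioo_mem_nhdsGT_of_mem ⟨le_rfl, one_pos⟩) hkey
  exact le_of_tendsto hten hev

lemma normal_ineq_epi {f : E → ℝ≥0∞}
    (hstar : ∀ p ∈ epiSet f, ∀ t : ℝ, 1 ≤ t → t • p ∈ epiSet f) :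
    ∀ p ∈ epiSet f, ∀ w ∈ normalConeP (epiSet f) p, iprod w p ≤ 0 := by
  rintro p hp w ⟨ε, hε, hmin⟩
  set N : ℝ := iprod p p with hN
  rw [iprod_comm]
  have hkey : ∀ s : ℝ, s ∈ Ioo (0:ℝ) 1 → iprod p w ≤ s * N / (2 * ε) := by
    intro s hs
    have ht := hstar p hp (1 + s) (by linarith [hs.1])
    have h := hmin _ ht
    rw [sqDist_comm (p + ε • w) p, sqDist_comm (p + ε • w) ((1 + s) • p)] at h
    have he : (1 + s) • p = p + s • p := by
      rw [add_smul, one_smul]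
    rw [he, sqDist_expand] at h
    have he2 : p - (p + ε • w) = (-ε) • w := by
      rw [neg_smul]
      abel
    rw [he2, iprod_smul_right] at h
    have h' : 0 ≤ -(2 * s * ε * iprod p w) + s ^ 2 * N := by
      rw [← hN] at h
      nlinarith [h]
    rw [le_div_iff₀ (by positivity : (0:ℝ) < 2 * ε)]
    have h2 : s * (iprod p w * (2 * ε)) ≤ s * (s * N) := by nlinarith [h']
    exact (mul_le_mul_iff_right₀ hs.1).mp h2
  have hten : Filter.Tendsto (fun s : ℝ => s * N / (2 * ε)) (nhdsWithin 0 (Ioi 0))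
      (nhds 0) := by
    have hc : Continuous (fun s : ℝ => s * N / (2 * ε)) := by fun_prop
    have h0 : (0:ℝ) * N / (2 * ε) = 0 := by norm_num
    exact (hc.tendsto' 0 0 h0).mono_left nhdsWithin_le_nhds
  have hev : ∀ᶠ s in nhdsWithin 0 (Ioi 0), iprod p w ≤ s * N / (2 * ε) :=
    Filter.eventually_of_mem (Ioo_mem_nhdsGT_of_mem ⟨le_rfl, one_pos⟩) hkey
  exact ge_of_tendsto hten hev

/-- An upper semicontinuous `f` is upper radial iff every proximal normal `(ζ,δ)` to `hypo f`
at `(x,u)` has `⟨ζ,x⟩ + δu ≥ 0`; a lower semicontinuous `f` is lower radial iff every proximal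
normal `(ζ,δ)` to `epi f` at `(x,u)` has `⟨ζ,x⟩ + δu ≤ 0`. -/
theorem semicontinuous_radial_characterization (f : E → ℝ≥0∞) :
    ((∀ p ∈ closure (hypoSet f), 0 < p.2 → p ∈ hypoSet f) →
      (UpperRadial f ↔
        ∀ p ∈ hypoSet f, ∀ w ∈ normalConeP (hypoSet f) p, 0 ≤ iprod w p)) ∧
    ((∀ p ∈ closure (epiSet f), 0 < p.2 → p ∈ epiSet f) →
      (LowerRadial f ↔
        ∀ p ∈ epiSet f, ∀ w ∈ normalConeP (epiSet f) p, iprod w p ≤ 0)) := by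
  constructor
  · intro hcl
    constructor
    · intro hur
      exact normal_ineq_hypo (fun p hp t ht ht1 =>
        star_of_mono_hypo (fun y => (hur y).1) hp ht ht1)
    · intro hN y
      exact ⟨mono_of_star_hypo (fun p hp t ht ht1 => star_hypo hcl hN hp ht ht1) y,
        usc_persp hcl y⟩
  · intro hcl
    constructor
    · intro hlr
      exact normal_ineq_epi (fun p hp t ht1 =>
        star_of_mono_epi (fun y => (hlr y).1) hp ht1)
    · intro hN y
      exact ⟨mono_of_star_epi (fun p hp t ht1 => star_epi hcl hN hp ht1) y,
        lsc_persp hcl y⟩
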